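/- For every real α > 2, every real m > 0, and every real c > 0, the improper integral ∫₀^∞ (1 − (t^{α/2}/(t^{α/2} + c))^m) dt converges and equals c^{2/α} · Γ(m + 2/α) · Γ(1 − 2/α) / Γ(m). -/

import Mathlib

open MeasureTheory Set Real
open scoped ENNReal

lemma complex_eq_ofReal {a b x : ℝ} (h0 : 0 ≤ x) (h1 : x ≤ 1) :
    (x:ℂ) ^ ((a:ℂ) - 1) * (1 - (x:ℂ)) ^ ((b:ℂ) - 1)
      = ((x ^ (a-1) * (1-x) ^ (b-1) : ℝ) : ℂ) := by
  have e1 : ((a:ℂ) - 1) = ((a - 1 : ℝ) : ℂ) := by push_cast; ring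
  have e2 : ((b:ℂ) - 1) = ((b - 1 : ℝ) : ℂ) := by push_cast; ring
  have e3 : (1 - (x:ℂ)) = ((1 - x : ℝ) : ℂ) := by push_cast; ring
  rw [e1, e2, e3, ← Complex.ofReal_cpow h0, ← Complex.ofReal_cpow (by linarith),
    ← Complex.ofReal_mul]

lemma beta_eq_complex {a b : ℝ} (ha : 0 < a) (hb : 0 < b) :
    Complex.betaIntegral a b = ((∫ x in (0:ℝ)..1, x ^ (a-1) * (1-x) ^ (b-1) : ℝ) : ℂ) := by
  rw [Complex.betaIntegral, ← intervalIntegral.integral_ofReal]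
  refine intervalIntegral.integral_congr fun x hx => ?_
  rw [uIcc_of_le zero_le_one] at hx
  exact complex_eq_ofReal hx.1 hx.2

lemma beta_integrable {a b : ℝ} (ha : 0 < a) (hb : 0 < b) :
    IntegrableOn (fun x : ℝ => x ^ (a-1) * (1-x) ^ (b-1)) (Ioo 0 1) := by
  have h := (Complex.betaIntegral_convergent (u := (a:ℂ)) (v := (b:ℂ))
    (by simpa using ha) (by simpa using hb)).1
  have h2 := h.re
  refine (IntegrableOn.congr_fun h2 (fun x hx => ?_) measurableSet_Ioc).mono_set
    Ioo_subset_Ioc_self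
  rw [complex_eq_ofReal hx.1.le hx.2]; exact Complex.ofReal_re _

lemma beta_value {a b : ℝ} (ha : 0 < a) (hb : 0 < b) :
    ∫ x in Ioo (0:ℝ) 1, x ^ (a-1) * (1-x) ^ (b-1)
      = Real.Gamma a * Real.Gamma b / Real.Gamma (a+b) := by
  have hG : Real.Gamma (a+b) ≠ 0 := (Real.Gamma_pos_of_pos (by linarith)).ne'
  have hC := Complex.Gamma_mul_Gamma_eq_betaIntegral
    (s := a) (t := b) (by simpa using ha) (by simpa using hb)
  rw [beta_eq_complex ha hb, ← Complex.ofReal_add, Complex.Gamma_ofReal, Complex.Gamma_ofReal,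
    Complex.Gamma_ofReal, ← Complex.ofReal_mul, ← Complex.ofReal_mul] at hC
  have h := Complex.ofReal_inj.mp hC
  rw [← integral_Ioc_eq_integral_Ioo, ← intervalIntegral.integral_of_le zero_le_one]
  field_simp
  linarith [h]

lemma key_iff {α c t y : ℝ} (hα : 2 < α) (hc : 0 < c) (ht : 0 < t)
    (hy : y ∈ Ioo (0:ℝ) 1) :
    t ^ (α/2) / (t ^ (α/2) + c) < y ↔ t < (c * y / (1 - y)) ^ (2/α) := by
  have hα0 : (0:ℝ) < α := by linarith
  have hs : 0 < t ^ (α/2) := rpow_pos_of_pos ht _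
  have h1y : 0 < 1 - y := by linarith [hy.2]
  have hA : 0 < c * y / (1 - y) := div_pos (mul_pos hc hy.1) h1y
  have h1 : t ^ (α/2) / (t ^ (α/2) + c) < y ↔ t ^ (α/2) < c * y / (1 - y) := by
    rw [div_lt_iff₀ (by linarith), lt_div_iff₀ h1y]
    constructor <;> intro h <;> nlinarith
  rw [h1]
  have h2 : ((c * y / (1 - y)) ^ (2/α)) ^ (α/2) = c * y / (1 - y) := by
    rw [← Real.rpow_mul hA.le]
    rw [show 2/α * (α/2) = 1 by field_simp, Real.rpow_one]
  conv_lhs => rw [← h2]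
  exact Real.rpow_lt_rpow_iff ht.le (Real.rpow_nonneg hA.le _) (by linarith)

lemma slice_integral {m : ℝ} (hm : 0 < m) {w : ℝ} (hw0 : 0 ≤ w) (hw1 : w ≤ 1) :
    ∫ y in Ioo w 1, m * y ^ (m-1) = 1 - w ^ m := by
  rw [← integral_Ioc_eq_integral_Ioo, ← intervalIntegral.integral_of_le hw1,
    intervalIntegral.integral_const_mul, integral_rpow (Or.inl (by linarith)),
    show m - 1 + 1 = m by ring, Real.one_rpow]
  field_simp

lemma slice_integrable {m : ℝ} (hm : 0 < m) {w : ℝ} (hw1 : w ≤ 1) :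
    IntegrableOn (fun y : ℝ => m * y ^ (m-1)) (Ioo w 1) := by
  have h := ((intervalIntegral.intervalIntegrable_rpow' (by linarith : (-1:ℝ) < m - 1)
    (a := w) (b := 1)).const_mul m).1
  exact h.mono_set Ioo_subset_Ioc_self

lemma lintegral_eq (α m c : ℝ) (hα : 2 < α) (hm : 0 < m) (hc : 0 < c) :
    ∫⁻ t in Ioi (0:ℝ), ENNReal.ofReal (1 - (t ^ (α/2) / (t ^ (α/2) + c)) ^ m)
      = ENNReal.ofReal (m * c ^ (2/α) *
          (Real.Gamma (m + 2/α) * Real.Gamma (1 - 2/α) / Real.Gamma (m + 1))) := by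
  have hα0 : (0:ℝ) < α := by linarith
  have hp0 : 0 < 2/α := by positivity
  have hp1 : 2/α < 1 := by rw [div_lt_one hα0]; linarith
  set T : ℝ → ℝ := fun y => (c * y / (1 - y)) ^ (2/α) with hT
  set S : Set (ℝ × ℝ) := {q | 0 < q.1 ∧ q.2 ∈ Ioo (0:ℝ) 1 ∧ q.1 < T q.2} with hSdef
  set F : ℝ × ℝ → ℝ≥0∞ := S.indicator (fun q => ENNReal.ofReal (m * q.2 ^ (m-1))) with hF
  have hTmeas : Measurable T := by
    exact ((measurable_const.mul measurable_id).div
      (measurable_const.sub measurable_id)).pow measurable_const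
  have hSmeas : MeasurableSet S := by
    have h1 : MeasurableSet {q : ℝ × ℝ | 0 < q.1} :=
      measurableSet_lt measurable_const measurable_fst
    have h2 : MeasurableSet {q : ℝ × ℝ | q.2 ∈ Ioo (0:ℝ) 1} :=
      measurable_snd measurableSet_Ioo
    have h3 : MeasurableSet {q : ℝ × ℝ | q.1 < T q.2} :=
      measurableSet_lt measurable_fst (hTmeas.comp measurable_snd)
    have : S = {q : ℝ × ℝ | 0 < q.1} ∩ ({q : ℝ × ℝ | q.2 ∈ Ioo (0:ℝ) 1} ∩
        {q : ℝ × ℝ | q.1 < T q.2}) := by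
      ext q; simp [hSdef, mem_setOf_eq, and_assoc]
    rw [this]; exact h1.inter (h2.inter h3)
  have hFmeas : Measurable F := by
    apply Measurable.indicator _ hSmeas
    exact (measurable_const.mul (measurable_snd.pow measurable_const)).ennreal_ofReal
  -- step 1: inner y-integral
  have e0 : ∀ t : ℝ, ∫⁻ y, F (t, y)
      = (Ioi (0:ℝ)).indicator
          (fun t => ENNReal.ofReal (1 - (t ^ (α/2) / (t ^ (α/2) + c)) ^ m)) t := by
    intro t
    by_cases ht : 0 < t
    · rw [indicator_of_mem (mem_Ioi.mpr ht)]
      have hs : 0 < t ^ (α/2) := rpow_pos_of_pos ht _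
      set w := t ^ (α/2) / (t ^ (α/2) + c) with hwdef
      have hw0 : 0 < w := div_pos hs (by linarith)
      have hw1 : w < 1 := by
        rw [hwdef, div_lt_one (by linarith)]; linarith
      have hsame : ∀ y, F (t, y)
          = (Ioo w 1).indicator (fun y => ENNReal.ofReal (m * y ^ (m-1))) y := by
        intro y
        rw [hF]
        by_cases hy : y ∈ Ioo (0:ℝ) 1
        · by_cases hty : t < T y
          · rw [indicator_of_mem (show (t,y) ∈ S from ⟨ht, hy, hty⟩),
              indicator_of_mem (show y ∈ Ioo w 1 from
                ⟨(key_iff hα hc ht hy).mpr hty, hy.2⟩)]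
          · rw [indicator_of_notMem (fun hmem : (t,y) ∈ S => hty hmem.2.2),
              indicator_of_notMem (fun hmem : y ∈ Ioo w 1 =>
                hty ((key_iff hα hc ht hy).mp hmem.1))]
        · rw [indicator_of_notMem (fun hmem : (t,y) ∈ S => hy hmem.2.1),
            indicator_of_notMem (fun hmem : y ∈ Ioo w 1 =>
              hy ⟨lt_trans hw0 hmem.1, hmem.2⟩)]
      simp_rw [hsame]
      rw [lintegral_indicator measurableSet_Ioo,
        ← ofReal_integral_eq_lintegral_ofReal (slice_integrable hm hw1.le)
          ((ae_restrict_iff' measurableSet_Ioo).mpr (ae_of_all _ fun y hy =>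
            mul_nonneg hm.le (rpow_nonneg (le_of_lt (lt_trans hw0 hy.1)) _))),
        slice_integral hm hw0.le hw1.le]
    · rw [indicator_of_notMem (by simpa using ht)]
      have : ∀ y : ℝ, F (t, y) = 0 := fun y =>
        indicator_of_notMem (fun hmem : (t,y) ∈ S => ht hmem.1) _
      simp [this]
  -- step 2: swap and compute
  have hbint : IntegrableOn
      (fun y : ℝ => (m * c ^ (2/α)) * (y ^ (m + 2/α - 1) * (1-y) ^ ((1 - 2/α) - 1)))
      (Ioo 0 1) := by
    have := (beta_integrable (a := m + 2/α) (b := 1 - 2/α)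
      (by linarith) (by linarith)).const_mul (m * c ^ (2/α))
    simp [show m + 2/α - 1 = (m + 2/α) - 1 by ring,
      show (1 - 2/α) - 1 = (1 - 2/α) - 1 by ring, mul_assoc] at this ⊢
    exact this
  calc ∫⁻ t in Ioi (0:ℝ), ENNReal.ofReal (1 - (t ^ (α/2) / (t ^ (α/2) + c)) ^ m)
      = ∫⁻ t, (Ioi (0:ℝ)).indicator
          (fun t => ENNReal.ofReal (1 - (t ^ (α/2) / (t ^ (α/2) + c)) ^ m)) t :=
        (lintegral_indicator measurableSet_Ioi _).symm
    _ = ∫⁻ t, ∫⁻ y, F (t, y) := lintegral_congr fun t => (e0 t).symm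
    _ = ∫⁻ y, ∫⁻ t, F (t, y) := lintegral_lintegral_swap hFmeas.aemeasurable
    _ = ∫⁻ y, (Ioo (0:ℝ) 1).indicator
          (fun y => ENNReal.ofReal (m * y ^ (m-1)) * ENNReal.ofReal (T y)) y := by
        refine lintegral_congr fun y => ?_
        by_cases hy : y ∈ Ioo (0:ℝ) 1
        · rw [indicator_of_mem hy]
          have hsame : ∀ t, F (t, y)
              = (Ioo 0 (T y)).indicator (fun _ => ENNReal.ofReal (m * y ^ (m-1))) t := by
            intro t
            rw [hF]
            by_cases ht : t ∈ Ioo 0 (T y)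
            · rw [indicator_of_mem (show (t,y) ∈ S from ⟨ht.1, hy, ht.2⟩),
                indicator_of_mem ht]
            · rw [indicator_of_notMem (fun hmem : (t,y) ∈ S =>
                ht ⟨hmem.1, hmem.2.2⟩), indicator_of_notMem ht]
          simp_rw [hsame]
          rw [lintegral_indicator measurableSet_Ioo, setLIntegral_const,
            Real.volume_Ioo, sub_zero]
        · rw [indicator_of_notMem hy]
          have : ∀ t : ℝ, F (t, y) = 0 := fun t =>
            indicator_of_notMem (fun hmem : (t,y) ∈ S => hy hmem.2.1) _
          simp [this]
    _ = ∫⁻ y in Ioo (0:ℝ) 1, ENNReal.ofReal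
          ((m * c ^ (2/α)) * (y ^ (m + 2/α - 1) * (1-y) ^ ((1 - 2/α) - 1))) := by
        rw [lintegral_indicator measurableSet_Ioo]
        refine setLIntegral_congr_fun measurableSet_Ioo (fun y hy => ?_)
        have h1y : 0 < 1 - y := by linarith [hy.2]
        rw [← ENNReal.ofReal_mul (mul_nonneg hm.le (rpow_nonneg hy.1.le _))]
        congr 1
        rw [hT]
        beta_reduce
        rw [div_rpow (mul_nonneg hc.le hy.1.le) h1y.le, mul_rpow hc.le hy.1.le,
          show m + 2/α - 1 = (m-1) + 2/α by ring, rpow_add hy.1,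
          show (1 - 2/α) - 1 = -(2/α) by ring, rpow_neg h1y.le]
        have hne : (1-y) ^ (2/α) ≠ 0 := (rpow_pos_of_pos h1y _).ne'
        field_simp
    _ = ENNReal.ofReal (m * c ^ (2/α) *
          (Real.Gamma (m + 2/α) * Real.Gamma (1 - 2/α) / Real.Gamma (m + 1))) := by
        rw [← ofReal_integral_eq_lintegral_ofReal hbint
          ((ae_restrict_iff' measurableSet_Ioo).mpr (ae_of_all _ fun y hy => by
            have h1y : 0 < 1 - y := by linarith [hy.2]
            have := hy.1
            positivity))]
        rw [MeasureTheory.integral_const_mul,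
          show m + 2/α - 1 = (m + 2/α) - 1 by ring,
          show (1 - 2/α) - 1 = (1 - 2/α) - 1 by ring,
          beta_value (by linarith : (0:ℝ) < m + 2/α) (by linarith : (0:ℝ) < 1 - 2/α),
          show m + 2/α + (1 - 2/α) = m + 1 by ring]

theorem stmt_0 (α m c : ℝ) (hα : 2 < α) (hm : 0 < m) (hc : 0 < c) :
    IntegrableOn (fun t : ℝ => 1 - (t ^ (α / 2) / (t ^ (α / 2) + c)) ^ m) (Ioi 0) ∧
    ∫ t in Ioi (0 : ℝ), (1 - (t ^ (α / 2) / (t ^ (α / 2) + c)) ^ m)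
      = c ^ (2 / α) * Real.Gamma (m + 2 / α) * Real.Gamma (1 - 2 / α) / Real.Gamma m := by
  have hα0 : (0:ℝ) < α := by linarith
  have hfmeas : Measurable (fun t : ℝ => 1 - (t ^ (α/2) / (t ^ (α/2) + c)) ^ m) := by
    have h1 : Measurable fun t : ℝ => t ^ (α/2) := measurable_id.pow measurable_const
    exact measurable_const.sub ((h1.div (h1.add_const c)).pow measurable_const)
  have hfnn : 0 ≤ᵐ[volume.restrict (Ioi (0:ℝ))]
      fun t : ℝ => 1 - (t ^ (α/2) / (t ^ (α/2) + c)) ^ m := by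
    refine (ae_restrict_iff' measurableSet_Ioi).mpr (ae_of_all _ fun t ht => ?_)
    show (0:ℝ) ≤ 1 - (t ^ (α/2) / (t ^ (α/2) + c)) ^ m
    have hs : 0 < t ^ (α/2) := rpow_pos_of_pos ht _
    have hw0 : 0 ≤ t ^ (α/2) / (t ^ (α/2) + c) := by positivity
    have hw1 : t ^ (α/2) / (t ^ (α/2) + c) ≤ 1 := by
      rw [div_le_one (by linarith)]; linarith
    have := Real.rpow_le_one hw0 hw1 hm.le
    linarith
  have hlint := lintegral_eq α m c hα hm hc
  have hGm : 0 < Real.Gamma m := Real.Gamma_pos_of_pos hm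
  have hGa : 0 < Real.Gamma (m + 2/α) := Real.Gamma_pos_of_pos (by positivity)
  have hGb : 0 < Real.Gamma (1 - 2/α) := Real.Gamma_pos_of_pos (by
    rw [sub_pos, div_lt_one hα0]; linarith)
  have hVnn : 0 ≤ m * c ^ (2/α) *
      (Real.Gamma (m + 2/α) * Real.Gamma (1 - 2/α) / Real.Gamma (m + 1)) := by
    have : 0 < Real.Gamma (m + 1) := Real.Gamma_pos_of_pos (by linarith)
    positivity
  have hV : m * c ^ (2/α) *
      (Real.Gamma (m + 2/α) * Real.Gamma (1 - 2/α) / Real.Gamma (m + 1))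
      = c ^ (2 / α) * Real.Gamma (m + 2 / α) * Real.Gamma (1 - 2 / α) / Real.Gamma m := by
    rw [Real.Gamma_add_one hm.ne']
    field_simp
  have hint : IntegrableOn (fun t : ℝ => 1 - (t ^ (α / 2) / (t ^ (α / 2) + c)) ^ m)
      (Ioi 0) := by
    refine ⟨hfmeas.aestronglyMeasurable, ?_⟩
    rw [hasFiniteIntegral_iff_ofReal hfnn, hlint]
    exact ENNReal.ofReal_lt_top
  refine ⟨hint, ?_⟩
  rw [integral_eq_lintegral_of_nonneg_ae hfnn hfmeas.aestronglyMeasurable, hlint,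
    ENNReal.toReal_ofReal hVnn, hV]
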